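/- Let A be a nonzero polynomial over F₂ with Collatz sequences (A_j), and set ℓ_k := deg(A_{2k+1}). Then for every k ≥ 0, ℓ_{k+1} ≤ ℓ_k ≤ deg(A); that is, the sequence of degrees of the odd terms of the Collatz sequences is nonincreasing and bounded above by deg(A). -/

import Mathlib

open Polynomial

/-- The analogue of 3 = first odd number > 1 : the first odd binary polynomial besides 1. -/
noncomputable def M1 : Polynomial (ZMod 2) := X ^ 2 + X + 1

/-- Valuation at `x` : multiplicity of the root 0. -/
noncomputable def valX (S : Polynomial (ZMod 2)) : ℕ := S.rootMultiplicity 0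

/-- Valuation at `x + 1` : multiplicity of the root 1 (note `X - 1 = X + 1` in characteristic 2). -/
noncomputable def valX1 (S : Polynomial (ZMod 2)) : ℕ := S.rootMultiplicity 1

/-- The odd part of a polynomial: `S / (x^{val_x S} (x+1)^{val_{x+1} S})`. -/
noncomputable def oddPart (S : Polynomial (ZMod 2)) : Polynomial (ZMod 2) :=
  S / (X ^ valX S * (X + 1) ^ valX1 S)

/-- The Collatz sequences `(A_j)` associated with `A`:
`A₀ = A`, `A_{2k+1} = oddPart (A_{2k})`, `A_{2k+2} = 1 + M₁ · A_{2k+1}`. -/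
noncomputable def collatz (A : Polynomial (ZMod 2)) : ℕ → Polynomial (ZMod 2)
  | 0 => A
  | j + 1 => if j % 2 = 0 then oddPart (collatz A j) else 1 + M1 * collatz A j

lemma Xadd1 : (X - C (1 : ZMod 2)) = X + 1 := by
  rw [CharTwo.sub_eq_add, map_one]

lemma X1_ne : (X + 1 : Polynomial (ZMod 2)) ≠ 0 := by
  intro h
  simpa using congrArg (eval 0) h

lemma den_ne (S : Polynomial (ZMod 2)) :
    (X ^ valX S * (X + 1) ^ valX1 S : Polynomial (ZMod 2)) ≠ 0 :=
  mul_ne_zero (pow_ne_zero _ X_ne_zero) (pow_ne_zero _ X1_ne)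

lemma coprimeXX1 : IsCoprime (X : Polynomial (ZMod 2)) (X + 1) :=
  ⟨1, 1, by ring_nf; simp [mul_two, CharTwo.add_self_eq_zero]⟩

lemma dvd_aux (S : Polynomial (ZMod 2)) :
    X ^ valX S * (X + 1) ^ valX1 S ∣ S := by
  apply (coprimeXX1.pow).mul_dvd
  · simpa [valX] using pow_rootMultiplicity_dvd S 0
  · rw [← Xadd1]; exact pow_rootMultiplicity_dvd S 1

lemma oddPart_mul (S : Polynomial (ZMod 2)) :
    X ^ valX S * (X + 1) ^ valX1 S * oddPart S = S :=
  EuclideanDomain.mul_div_cancel' (den_ne S) (dvd_aux S)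

lemma oddPart_ne_zero {S : Polynomial (ZMod 2)} (hS : S ≠ 0) : oddPart S ≠ 0 := by
  intro h
  rw [← oddPart_mul S, h, mul_zero] at hS
  exact hS rfl

lemma natDegree_oddPart (S : Polynomial (ZMod 2)) (hS : S ≠ 0) :
    S.natDegree = valX S + valX1 S + (oddPart S).natDegree := by
  conv_lhs => rw [← oddPart_mul S]
  rw [natDegree_mul (den_ne S) (oddPart_ne_zero hS),
    natDegree_mul (pow_ne_zero _ X_ne_zero) (pow_ne_zero _ X1_ne), natDegree_pow,
    natDegree_pow, natDegree_X]
  have : (X + 1 : Polynomial (ZMod 2)).natDegree = 1 := by compute_degree!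
  rw [this]; ring

lemma zmod2_ne0 {a : ZMod 2} (h : a ≠ 0) : a = 1 := by revert h; revert a; decide

lemma oddPart_eval0 {S : Polynomial (ZMod 2)} (hS : S ≠ 0) : (oddPart S).eval 0 ≠ 0 := by
  intro h
  have hdvd : (X : Polynomial (ZMod 2)) ∣ oddPart S := by
    simpa using (dvd_iff_isRoot (p := oddPart S) (a := 0)).mpr h
  obtain ⟨Q, hQ⟩ := hdvd
  have key : (X : Polynomial (ZMod 2)) ^ (valX S + 1) * ((X + 1) ^ valX1 S * Q) = S := by
    conv_rhs => rw [← oddPart_mul S, hQ]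
    ring
  have : (X - C (0:ZMod 2)) ^ (rootMultiplicity 0 S + 1) ∣ S := by
    rw [map_zero, sub_zero]
    exact ⟨(X + 1) ^ valX1 S * Q, key.symm⟩
  exact pow_rootMultiplicity_not_dvd hS 0 this

lemma oddPart_eval1 {S : Polynomial (ZMod 2)} (hS : S ≠ 0) : (oddPart S).eval 1 ≠ 0 := by
  intro h
  have hdvd : (X + 1 : Polynomial (ZMod 2)) ∣ oddPart S := by
    rw [← Xadd1]; exact (dvd_iff_isRoot (p := oddPart S) (a := 1)).mpr h
  obtain ⟨Q, hQ⟩ := hdvd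
  have key : (X + 1 : Polynomial (ZMod 2)) ^ (valX1 S + 1) * (X ^ valX S * Q) = S := by
    conv_rhs => rw [← oddPart_mul S, hQ]
    ring
  have : (X - C (1:ZMod 2)) ^ (rootMultiplicity 1 S + 1) ∣ S := by
    rw [Xadd1]
    exact ⟨X ^ valX S * Q, key.symm⟩
  exact pow_rootMultiplicity_not_dvd hS 1 this

lemma M1_natDegree : M1.natDegree = 2 := by unfold M1; compute_degree!
lemma M1_ne_zero : M1 ≠ 0 := by
  intro h
  have := M1_natDegree
  rw [h] at this; simp at this
lemma M1_eval0 : M1.eval 0 = 1 := by simp [M1]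
lemma M1_eval1 : M1.eval 1 = 1 := by simp [M1]; decide

lemma step_ne_zero {B : Polynomial (ZMod 2)} (hB : B ≠ 0) : 1 + M1 * B ≠ 0 := by
  intro h
  have h1 : M1 * B = 1 := by
    have := congrArg (· + M1 * B) h
    simpa [CharTwo.add_self_eq_zero, add_assoc] using this.symm
  have := congrArg natDegree h1
  rw [natDegree_mul M1_ne_zero hB, M1_natDegree] at this
  simp at this

lemma collatz_odd_succ (A : Polynomial (ZMod 2)) (k : ℕ) :
    collatz A (2 * k + 1) = oddPart (collatz A (2 * k)) := by
  have h : (2 * k) % 2 = 0 := by omega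
  simp [collatz, h]

lemma collatz_even_succ (A : Polynomial (ZMod 2)) (k : ℕ) :
    collatz A (2 * k + 2) = 1 + M1 * collatz A (2 * k + 1) := by
  have h : (2 * k + 1) % 2 = 1 := by omega
  show collatz A ((2 * k + 1) + 1) = _
  simp [collatz, h]

lemma collatz_ne {A : Polynomial (ZMod 2)} (hA : A ≠ 0) : ∀ j, collatz A j ≠ 0 := by
  intro j
  induction j with
  | zero => exact hA
  | succ j ih =>
    by_cases h : j % 2 = 0
    · simp only [collatz, h, if_true]
      exact oddPart_ne_zero ih
    · simp only [collatz, h, if_false]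
      exact step_ne_zero ih

lemma step_le {B : Polynomial (ZMod 2)} (hB : B ≠ 0) (h0 : B.eval 0 ≠ 0) (h1 : B.eval 1 ≠ 0) :
    (oddPart (1 + M1 * B)).natDegree ≤ B.natDegree := by
  set S := 1 + M1 * B with hSdef
  have hS : S ≠ 0 := step_ne_zero hB
  have hdeg : S.natDegree = B.natDegree + 2 := by
    have hMB : (M1 * B).natDegree = B.natDegree + 2 := by
      rw [natDegree_mul M1_ne_zero hB, M1_natDegree]; ring
    rw [hSdef, natDegree_add_eq_right_of_natDegree_lt, hMB]
    rw [natDegree_one, hMB]; omega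
  have e0 : S.eval 0 = 0 := by
    rw [show S.eval 0 = 1 + M1.eval 0 * B.eval 0 by simp [hSdef], M1_eval0, zmod2_ne0 h0]
    decide
  have e1 : S.eval 1 = 0 := by
    rw [show S.eval 1 = 1 + M1.eval 1 * B.eval 1 by simp [hSdef], M1_eval1, zmod2_ne0 h1]
    decide
  have a1 : 1 ≤ valX S := (rootMultiplicity_pos hS).mpr e0
  have b1 : 1 ≤ valX1 S := (rootMultiplicity_pos hS).mpr e1
  have := natDegree_oddPart S hS
  omega

/-- the degrees `ℓ_k = deg A_{2k+1}` of the odd terms form a nonincreasing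
sequence bounded above by `deg A`. -/
theorem odd_degrees_nonincreasing (A : Polynomial (ZMod 2)) (hA : A ≠ 0) :
    ∀ k : ℕ, (collatz A (2 * (k + 1) + 1)).natDegree ≤ (collatz A (2 * k + 1)).natDegree ∧
      (collatz A (2 * k + 1)).natDegree ≤ A.natDegree := by
  have dec : ∀ k : ℕ,
      (collatz A (2 * (k + 1) + 1)).natDegree ≤ (collatz A (2 * k + 1)).natDegree := by
    intro k
    have hB : collatz A (2 * k + 1) ≠ 0 := collatz_ne hA _
    have hform := collatz_odd_succ A k
    have h0 : (collatz A (2 * k + 1)).eval 0 ≠ 0 := by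
      rw [hform]; exact oddPart_eval0 (collatz_ne hA _)
    have h1 : (collatz A (2 * k + 1)).eval 1 ≠ 0 := by
      rw [hform]; exact oddPart_eval1 (collatz_ne hA _)
    have hrw : collatz A (2 * (k + 1) + 1) = oddPart (1 + M1 * collatz A (2 * k + 1)) := by
      rw [collatz_odd_succ A (k + 1), show 2 * (k + 1) = 2 * k + 2 by ring,
        collatz_even_succ A k]
    rw [hrw]
    exact step_le hB h0 h1
  have bdd : ∀ k : ℕ, (collatz A (2 * k + 1)).natDegree ≤ A.natDegree := by
    intro k
    induction k with
    | zero =>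
      have h1 : collatz A (2 * 0 + 1) = oddPart A := collatz_odd_succ A 0
      have := natDegree_oddPart A hA
      rw [h1]; omega
    | succ k ih => exact le_trans (dec k) ih
  exact fun k => ⟨dec k, bdd k⟩
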